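/- Let M and L be closed subspaces of a Hilbert space H, let P_L denote the orthogonal projection of H onto L, and let R ⊆ M be a subspace that is dense in M. (1) If R is an operator range (i.e. R = ran B for some bounded linear operator B from a Hilbert space E to H) and P_L(R) = L, then M ∩ ker P_L = clos(R ∩ ker P_L), where clos denotes topological closure. (2) If L is finite-dimensional, then every dense subspace R of M for which P_L(R) is dense in L satisfies both P_L(R) = L and M ∩ ker P_L = clos(R ∩ ker P_L). -/

import Mathlib

open Submodule

theorem aux_key_denseness
    {H : Type*} [NormedAddCommGroup H] [InnerProductSpace ℂ H] [CompleteSpace H]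
    (M L : Submodule ℂ H) (hM : IsClosed (M : Set H))
    (P : H →L[ℂ] H) (hPL : ∀ x, P x ∈ L)
    (R : Submodule ℂ H) (hRM : R ≤ M) (hdense : R.topologicalClosure = M)
    (C : ℝ) (hC : 0 < C) (hlift : ∀ l ∈ L, ∃ r ∈ R, P r = l ∧ ‖r‖ ≤ C * ‖l‖) :
    M ⊓ LinearMap.ker (P : H →ₗ[ℂ] H) = (R ⊓ LinearMap.ker (P : H →ₗ[ℂ] H)).topologicalClosure := by
  apply le_antisymm
  · rintro x ⟨hxM, hxK⟩
    have hxK' : P x = 0 := hxK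
    rw [← hdense] at hxM
    have hxc : x ∈ closure (R : Set H) := hxM
    show x ∈ closure ((R ⊓ LinearMap.ker (P : H →ₗ[ℂ] H) : Submodule ℂ H) : Set H)
    rw [Metric.mem_closure_iff] at hxc ⊢
    intro ε hε
    set D := 1 + C * ‖P‖ with hD
    have hP0 : (0:ℝ) ≤ ‖P‖ := norm_nonneg _
    have hD0 : 0 < D := by positivity
    obtain ⟨r, hrR, hdr⟩ := hxc (ε / D) (by positivity)
    have hPr : ‖P r‖ ≤ ‖P‖ * dist x r := by
      calc ‖P r‖ = ‖P (r - x)‖ := by rw [map_sub, hxK', sub_zero]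
      _ ≤ ‖P‖ * ‖r - x‖ := P.le_opNorm _
      _ = ‖P‖ * dist x r := by rw [← dist_eq_norm, dist_comm]
    obtain ⟨s, hsR, hPs, hns⟩ := hlift (P r) (hPL r)
    refine ⟨r - s, ⟨R.sub_mem hrR hsR, ?_⟩, ?_⟩
    · show P (r - s) = 0
      rw [map_sub, hPs, sub_self]
    · have h1 : dist x (r - s) ≤ dist x r + ‖s‖ := by
        rw [dist_eq_norm]
        calc ‖x - (r - s)‖ = ‖(x - r) + s‖ := by congr 1; abel
        _ ≤ ‖x - r‖ + ‖s‖ := norm_add_le _ _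
        _ = dist x r + ‖s‖ := by rw [← dist_eq_norm]
      have h2 : ‖s‖ ≤ C * (‖P‖ * dist x r) :=
        le_trans hns (by nlinarith [norm_nonneg (P r)])
      have h3 : dist x r < ε / D := hdr
      have : dist x (r - s) < ε := by
        have hd0 : (0:ℝ) ≤ dist x r := dist_nonneg
        calc dist x (r - s) ≤ D * dist x r := by rw [hD]; nlinarith
        _ < D * (ε / D) := by exact (mul_lt_mul_iff_right₀ hD0).mpr h3
        _ = ε := by field_simp
      exact this
  · apply Submodule.topologicalClosure_minimal
    · exact inf_le_inf_right _ hRM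
    · have : ((M ⊓ LinearMap.ker (P : H →ₗ[ℂ] H) : Submodule ℂ H) : Set H)
          = (M : Set H) ∩ (LinearMap.ker (P : H →ₗ[ℂ] H) : Set H) := rfl
      rw [this]
      exact hM.inter (ContinuousLinearMap.isClosed_ker P)


/-- Lemma 2.2 (denseness result): for closed subspaces `M`, `L` of a Hilbert space `H`
with orthogonal projection `P` onto `L`, and a subspace `R ⊆ M` dense in `M`:
(1) if `R` is an operator range and `P(R) = L`, then `M ∩ ker P = clos (R ∩ ker P)`;
(2) if `L` is finite dimensional, any such dense `R` with `P(R)` dense in `L` satisfies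
both `P(R) = L` and `M ∩ ker P = clos (R ∩ ker P)`. -/
theorem denseness_in_kernel_of_projection
    {H : Type*} [NormedAddCommGroup H] [InnerProductSpace ℂ H] [CompleteSpace H]
    (M L : Submodule ℂ H) (hM : IsClosed (M : Set H)) (hL : IsClosed (L : Set H))
    (P : H →L[ℂ] H) (hP : ∀ x, P x ∈ L ∧ x - P x ∈ Lᗮ) :
    (∀ R : Submodule ℂ H, R ≤ M → R.topologicalClosure = M →
      (∃ (E : Type) (_ : NormedAddCommGroup E) (_ : InnerProductSpace ℂ E)
          (_ : CompleteSpace E) (B : E →L[ℂ] H), LinearMap.range (B : E →ₗ[ℂ] H) = R) →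
      R.map (P : H →ₗ[ℂ] H) = L →
      M ⊓ LinearMap.ker (P : H →ₗ[ℂ] H) = (R ⊓ LinearMap.ker (P : H →ₗ[ℂ] H)).topologicalClosure) ∧
    (FiniteDimensional ℂ L →
      ∀ R : Submodule ℂ H, R ≤ M → R.topologicalClosure = M →
        (R.map (P : H →ₗ[ℂ] H)).topologicalClosure = L →
        R.map (P : H →ₗ[ℂ] H) = L ∧
          M ⊓ LinearMap.ker (P : H →ₗ[ℂ] H) = (R ⊓ LinearMap.ker (P : H →ₗ[ℂ] H)).topologicalClosure) := by
  have hPL : ∀ x, P x ∈ L := fun x => (hP x).1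
  haveI : CompleteSpace L := hL.completeSpace_coe
  constructor
  · rintro R hRM hdense ⟨E, _, _, _, B, hB⟩ hmap
    -- operator range case
    set f : E →L[ℂ] L := (P.comp B).codRestrict L (fun e => hPL (B e)) with hf
    have hfsurj : Function.Surjective f := by
      rintro ⟨l, hl⟩
      rw [← hmap] at hl
      obtain ⟨r, hrR, hrl⟩ := hl
      rw [← hB] at hrR
      obtain ⟨e, he⟩ := hrR
      refine ⟨e, Subtype.ext ?_⟩
      show P (B e) = l
      have he' : B e = r := he
      rw [he']; exact hrl
    obtain ⟨C, hC0, hC⟩ := ContinuousLinearMap.exists_preimage_norm_le f hfsurj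
    apply aux_key_denseness M L hM P hPL R hRM hdense ((‖B‖ + 1) * C)
      (by positivity)
    intro l hl
    obtain ⟨e, hfe, hne⟩ := hC ⟨l, hl⟩
    refine ⟨B e, ?_, ?_, ?_⟩
    · rw [← hB]; exact ⟨e, rfl⟩
    · exact congrArg Subtype.val hfe
    · have h1 : ‖B e‖ ≤ ‖B‖ * ‖e‖ := B.le_opNorm e
      have h2 : ‖(⟨l, hl⟩ : L)‖ = ‖l‖ := rfl
      rw [h2] at hne
      nlinarith [norm_nonneg (B : E →L[ℂ] H), norm_nonneg e, norm_nonneg l]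
  · intro hfin R hRM hdense hdmap
    have hmaple : R.map (P : H →ₗ[ℂ] H) ≤ L := by
      rintro _ ⟨r, -, rfl⟩; exact hPL r
    haveI : FiniteDimensional ℂ (R.map (P : H →ₗ[ℂ] H)) :=
      Submodule.finiteDimensional_of_le hmaple
    have hclosed : IsClosed ((R.map (P : H →ₗ[ℂ] H)) : Set H) :=
      Submodule.closed_of_finiteDimensional _
    have hmap : R.map (P : H →ₗ[ℂ] H) = L := by
      rw [← hdmap]
      exact (IsClosed.submodule_topologicalClosure_eq hclosed).symm
    refine ⟨hmap, ?_⟩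
    -- build a continuous linear lifting L → H with values in R
    set f : R →ₗ[ℂ] L :=
      LinearMap.codRestrict L ((P : H →ₗ[ℂ] H).comp R.subtype)
        (fun r => hPL r) with hf
    have hfrange : LinearMap.range f = ⊤ := by
      rw [LinearMap.range_eq_top]
      rintro ⟨l, hl⟩
      rw [← hmap] at hl
      obtain ⟨r, hrR, hrl⟩ := hl
      exact ⟨⟨r, hrR⟩, Subtype.ext hrl⟩
    obtain ⟨g, hg⟩ := f.exists_rightInverse_of_surjective hfrange
    set T : L →ₗ[ℂ] H := R.subtype.comp g with hT
    have hTcont : Continuous T := T.continuous_of_finiteDimensional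
    set T' : L →L[ℂ] H := ⟨T, hTcont⟩ with hT'
    apply aux_key_denseness M L hM P hPL R hRM hdense (‖T'‖ + 1)
      (by positivity)
    intro l hl
    refine ⟨T ⟨l, hl⟩, (g ⟨l, hl⟩).2, ?_, ?_⟩
    · have h := LinearMap.ext_iff.mp hg ⟨l, hl⟩
      have h2 := congrArg Subtype.val h
      exact h2
    · have h1 : ‖T' ⟨l, hl⟩‖ ≤ ‖T'‖ * ‖(⟨l, hl⟩ : L)‖ := T'.le_opNorm _
      have h2 : ‖(⟨l, hl⟩ : L)‖ = ‖l‖ := rfl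
      rw [h2] at h1
      have : T ⟨l, hl⟩ = T' ⟨l, hl⟩ := rfl
      rw [this]
      have h3 : ‖T'‖ * ‖l‖ ≤ (‖T'‖ + 1) * ‖l‖ :=
        mul_le_mul_of_nonneg_right (by linarith) (norm_nonneg l)
      linarith
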